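/- For all real x > 0 and y in (0,1), the function f(x,y) = (coth(x) - y coth(xy)) / ((xy coth(xy) - 1)(x coth(x) - 1)) + 4(1 - y^{-2}) / (sinh(2x) - 2x) is strictly positive. -/

import Mathlib

noncomputable def coth (x : ℝ) : ℝ := Real.cosh x / Real.sinh x

open Real

/-- generic exponential-polynomial function -/
noncomputable def E (a3 a2 a1 a0 b3 b2 b1 b0 r4 r3 r2 r1 r0 : ℝ) : ℝ → ℝ :=
  fun t => Real.exp (2 * t) * (a3 * t ^ 3 + a2 * t ^ 2 + a1 * t + a0) +
    Real.exp ((-2) * t) * (b3 * t ^ 3 + b2 * t ^ 2 + b1 * t + b0) +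
    (r4 * t ^ 4 + r3 * t ^ 3 + r2 * t ^ 2 + r1 * t + r0)

lemma hasDerivAt_cubic (c3 c2 c1 c0 t : ℝ) :
    HasDerivAt (fun x : ℝ => c3 * x ^ 3 + c2 * x ^ 2 + c1 * x + c0)
      (3 * c3 * t ^ 2 + 2 * c2 * t + c1) t := by
  have h := ((((hasDerivAt_pow 3 t).const_mul c3).add
      ((hasDerivAt_pow 2 t).const_mul c2)).add
      ((hasDerivAt_id' (𝕜 := ℝ) (x := t)).const_mul c1)).add_const c0
  refine h.congr_deriv ?_
  push_cast
  ring

lemma hasDerivAt_quartic (r4 r3 r2 r1 r0 t : ℝ) :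
    HasDerivAt (fun x : ℝ => r4 * x ^ 4 + r3 * x ^ 3 + r2 * x ^ 2 + r1 * x + r0)
      (4 * r4 * t ^ 3 + 3 * r3 * t ^ 2 + 2 * r2 * t + r1) t := by
  have h := (((((hasDerivAt_pow 4 t).const_mul r4).add
      ((hasDerivAt_pow 3 t).const_mul r3)).add
      ((hasDerivAt_pow 2 t).const_mul r2)).add
      ((hasDerivAt_id' (𝕜 := ℝ) (x := t)).const_mul r1)).add_const r0
  refine h.congr_deriv ?_
  push_cast
  ring

lemma hasDerivAt_E (a3 a2 a1 a0 b3 b2 b1 b0 r4 r3 r2 r1 r0 t : ℝ) :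
    HasDerivAt (E a3 a2 a1 a0 b3 b2 b1 b0 r4 r3 r2 r1 r0)
      (E (2*a3) (2*a2+3*a3) (2*a1+2*a2) (2*a0+a1)
         (-2*b3) (-2*b2+3*b3) (-2*b1+2*b2) (-2*b0+b1)
         0 (4*r4) (3*r3) (2*r2) r1 t) t := by
  have h2t : HasDerivAt (fun s : ℝ => 2 * s) (2 * 1) t :=
    (hasDerivAt_id' (𝕜 := ℝ) (x := t)).const_mul 2
  have hm2t : HasDerivAt (fun s : ℝ => (-2) * s) ((-2) * 1) t :=
    (hasDerivAt_id' (𝕜 := ℝ) (x := t)).const_mul (-2)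
  have hexp1 := h2t.exp
  have hexp2 := hm2t.exp
  have h := ((hexp1.mul (hasDerivAt_cubic a3 a2 a1 a0 t)).add
      (hexp2.mul (hasDerivAt_cubic b3 b2 b1 b0 t))).add
      (hasDerivAt_quartic r4 r3 r2 r1 r0 t)
  refine h.congr_deriv ?_
  simp only [E]
  ring

lemma mono_aux (f f' : ℝ → ℝ) (hd : ∀ t, HasDerivAt f (f' t) t)
    (h0 : f 0 = 0) (hf' : ∀ t, 0 ≤ t → 0 ≤ f' t) : ∀ t, 0 ≤ t → 0 ≤ f t := by
  intro t ht
  have mono : MonotoneOn f (Set.Ici 0) :=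
    monotoneOn_of_deriv_nonneg (convex_Ici 0)
      (fun u _ => (hd u).continuousAt.continuousWithinAt)
      (fun u _ => (hd u).differentiableAt.differentiableWithinAt)
      (fun u hu => by
        rw [(hd u).deriv]
        exact hf' u (le_of_lt (by rwa [interior_Ici, Set.mem_Ioi] at hu)))
  calc (0:ℝ) = f 0 := h0.symm
    _ ≤ f t := mono Set.self_mem_Ici ht ht

lemma L10 : ∀ t : ℝ, 0 ≤ t →
    0 ≤ E 1024 9216 19968 9216 (-1024) 9216 (-19968) 9216 0 0 0 0 0 t := by
  intro t ht
  have he : Real.exp ((-2) * t) ≤ Real.exp (2 * t) := Real.exp_le_exp.2 (by nlinarith)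
  have hep : 0 < Real.exp ((-2) * t) := Real.exp_pos _
  have h1 : (0:ℝ) ≤ 1024 * t ^ 3 + 19968 * t := by positivity
  simp only [E]
  nlinarith [mul_nonneg (sub_nonneg.2 he) h1, mul_pos hep (show (0:ℝ) < 9216 * t ^ 2 + 9216 by positivity)]

lemma L9 : ∀ t : ℝ, 0 ≤ t →
    0 ≤ E 512 3840 6144 1536 512 (-3840) 6144 (-1536) 0 0 0 0 0 t := by
  refine mono_aux _ _ (fun t => ?_) (by norm_num [E]) (fun t ht => L10 t ht)
  have h := hasDerivAt_E 512 3840 6144 1536 512 (-3840) 6144 (-1536) 0 0 0 0 0 t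
  norm_num at h
  exact h

lemma L8 : ∀ t : ℝ, 0 ≤ t →
    0 ≤ E 256 1536 1536 0 (-256) 1536 (-1536) 0 0 0 0 0 0 t := by
  refine mono_aux _ _ (fun t => ?_) (by norm_num [E]) (fun t ht => L9 t ht)
  have h := hasDerivAt_E 256 1536 1536 0 (-256) 1536 (-1536) 0 0 0 0 0 0 t
  norm_num at h
  exact h

lemma L7 : ∀ t : ℝ, 0 ≤ t →
    0 ≤ E 128 576 192 (-96) 128 (-576) 192 96 0 0 0 0 0 t := by
  refine mono_aux _ _ (fun t => ?_) (by norm_num [E]) (fun t ht => L8 t ht)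
  have h := hasDerivAt_E 128 576 192 (-96) 128 (-576) 192 96 0 0 0 0 0 t
  norm_num at h
  exact h

lemma L6 : ∀ t : ℝ, 0 ≤ t →
    0 ≤ E 64 192 (-96) 0 (-64) 192 96 0 0 0 0 0 0 t := by
  refine mono_aux _ _ (fun t => ?_) (by norm_num [E]) (fun t ht => L7 t ht)
  have h := hasDerivAt_E 64 192 (-96) 0 (-64) 192 96 0 0 0 0 0 0 t
  norm_num at h
  exact h

lemma L5 : ∀ t : ℝ, 0 ≤ t →
    0 ≤ E 32 48 (-96) 48 32 (-48) (-96) (-48) 0 0 0 0 0 t := by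
  refine mono_aux _ _ (fun t => ?_) (by norm_num [E]) (fun t ht => L6 t ht)
  have h := hasDerivAt_E 32 48 (-96) 48 32 (-48) (-96) (-48) 0 0 0 0 0 t
  norm_num at h
  exact h

lemma L4 : ∀ t : ℝ, 0 ≤ t →
    0 ≤ E 16 0 (-48) 48 (-16) 0 48 48 0 0 0 0 (-96) t := by
  refine mono_aux _ _ (fun t => ?_) (by norm_num [E]) (fun t ht => L5 t ht)
  have h := hasDerivAt_E 16 0 (-48) 48 (-16) 0 48 48 0 0 0 0 (-96) t
  norm_num at h
  exact h

lemma L3 : ∀ t : ℝ, 0 ≤ t →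
    0 ≤ E 8 (-12) (-12) 30 8 12 (-12) (-30) 0 0 0 (-96) 0 t := by
  refine mono_aux _ _ (fun t => ?_) (by norm_num [E]) (fun t ht => L4 t ht)
  have h := hasDerivAt_E 8 (-12) (-12) 30 8 12 (-12) (-30) 0 0 0 (-96) 0 t
  norm_num at h
  exact h

lemma L2 : ∀ t : ℝ, 0 ≤ t →
    0 ≤ E 4 (-12) 6 12 (-4) (-12) (-6) 12 0 0 (-48) 0 (-24) t := by
  refine mono_aux _ _ (fun t => ?_) (by norm_num [E]) (fun t ht => L3 t ht)
  have h := hasDerivAt_E 4 (-12) 6 12 (-4) (-12) (-6) 12 0 0 (-48) 0 (-24) t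
  norm_num at h
  exact h

lemma L1 : ∀ t : ℝ, 0 ≤ t →
    0 ≤ E 2 (-9) 12 0 2 9 12 0 0 (-16) 0 (-24) 0 t := by
  refine mono_aux _ _ (fun t => ?_) (by norm_num [E]) (fun t ht => L2 t ht)
  have h := hasDerivAt_E 2 (-9) 12 0 2 9 12 0 0 (-16) 0 (-24) 0 t
  norm_num at h
  exact h

lemma L0 : ∀ t : ℝ, 0 ≤ t →
    0 ≤ E 1 (-6) 12 (-6) (-1) (-6) (-12) (-6) (-4) 0 (-12) 0 12 t := by
  refine mono_aux _ _ (fun t => ?_) (by norm_num [E]) (fun t ht => L1 t ht)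
  have h := hasDerivAt_E 1 (-6) 12 (-6) (-1) (-6) (-12) (-6) (-4) 0 (-12) 0 12 t
  norm_num at h
  exact h

/-- the key inequality: t^3 (sinh t cosh t - t) ≥ 6 (t cosh t - sinh t)^2 -/
lemma key_B (t : ℝ) (ht : 0 ≤ t) :
    6 * (t * Real.cosh t - Real.sinh t) ^ 2 ≤ t ^ 3 * (Real.sinh t * Real.cosh t - t) := by
  have h := L0 t ht
  have ha : (0:ℝ) < Real.exp t := Real.exp_pos t
  have hid : t ^ 3 * (Real.sinh t * Real.cosh t - t) - 6 * (t * Real.cosh t - Real.sinh t) ^ 2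
      = (E 1 (-6) 12 (-6) (-1) (-6) (-12) (-6) (-4) 0 (-12) 0 12 t) / 4 := by
    have e2 : Real.exp (2 * t) = Real.exp t * Real.exp t := by
      rw [two_mul, Real.exp_add]
    have em2 : Real.exp ((-2) * t) = (Real.exp t * Real.exp t)⁻¹ := by
      rw [show (-2 : ℝ) * t = -(2 * t) by ring, Real.exp_neg, e2]
    simp only [E, Real.sinh_eq, Real.cosh_eq, Real.exp_neg, e2, em2]
    field_simp
    ring
  linarith

/-- t cosh t - sinh t > 0 for t > 0 -/
lemma den_pos (t : ℝ) (ht : 0 < t) : 0 < t * Real.cosh t - Real.sinh t := by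
  have hmono : StrictMonoOn (fun t : ℝ => t * Real.cosh t - Real.sinh t) (Set.Ici 0) := by
    apply strictMonoOn_of_deriv_pos (convex_Ici 0)
    · fun_prop
    · intro u hu
      rw [interior_Ici, Set.mem_Ioi] at hu
      have hd : HasDerivAt (fun t : ℝ => t * Real.cosh t - Real.sinh t) (u * Real.sinh u) u := by
        have h := ((hasDerivAt_id' (𝕜 := ℝ) (x := u)).mul (Real.hasDerivAt_cosh u)).sub
          (Real.hasDerivAt_sinh u)
        refine h.congr_deriv ?_
        ring
      rw [hd.deriv]
      exact mul_pos hu (by simpa using hu)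
  have := hmono (Set.self_mem_Ici) (Set.mem_Ici.2 ht.le) ht
  simpa using this

lemma cosh_lb (t : ℝ) (ht : 0 < t) : 1 + t ^ 2 / 2 < Real.cosh t := by
  have hmono : StrictMonoOn (fun t : ℝ => Real.cosh t - 1 - t ^ 2 / 2) (Set.Ici 0) := by
    apply strictMonoOn_of_deriv_pos (convex_Ici 0)
    · fun_prop
    · intro u hu
      rw [interior_Ici, Set.mem_Ioi] at hu
      have hd : HasDerivAt (fun t : ℝ => Real.cosh t - 1 - t ^ 2 / 2) (Real.sinh u - u) u := by
        have h := ((Real.hasDerivAt_cosh u).sub_const 1).sub ((hasDerivAt_pow 2 u).div_const 2)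
        refine h.congr_deriv ?_
        push_cast
        ring
      rw [hd.deriv]
      have : u < Real.sinh u := by simpa using hu
      linarith
  have := hmono (Set.self_mem_Ici) (Set.mem_Ici.2 ht.le) ht
  simp only [Real.cosh_zero] at this
  nlinarith [this]

lemma sinh_lb (t : ℝ) (ht : 0 < t) : t + t ^ 3 / 6 < Real.sinh t := by
  have hmono : StrictMonoOn (fun t : ℝ => Real.sinh t - t - t ^ 3 / 6) (Set.Ici 0) := by
    apply strictMonoOn_of_deriv_pos (convex_Ici 0)
    · fun_prop
    · intro u hu
      rw [interior_Ici, Set.mem_Ioi] at hu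
      have hd : HasDerivAt (fun t : ℝ => Real.sinh t - t - t ^ 3 / 6)
          (Real.cosh u - 1 - u ^ 2 / 2) u := by
        have h := ((Real.hasDerivAt_sinh u).sub (hasDerivAt_id' (𝕜 := ℝ) (x := u))).sub
          ((hasDerivAt_pow 3 u).div_const 6)
        refine h.congr_deriv ?_
        push_cast
        ring
      rw [hd.deriv]
      have := cosh_lb u hu
      linarith
  have := hmono (Set.self_mem_Ici) (Set.mem_Ici.2 ht.le) ht
  simp only [Real.sinh_zero] at this
  nlinarith [this]

lemma phi_deriv (K t : ℝ) (ht : 0 < t) :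
    HasDerivAt (fun t : ℝ => Real.sinh t / (t * Real.cosh t - Real.sinh t) - K / t ^ 2)
      ((t - Real.sinh t * Real.cosh t) / (t * Real.cosh t - Real.sinh t) ^ 2 + 2 * K / t ^ 3) t := by
  have hden : t * Real.cosh t - Real.sinh t ≠ 0 := ne_of_gt (den_pos t ht)
  have h1 : HasDerivAt (fun t : ℝ => t * Real.cosh t - Real.sinh t)
      (1 * Real.cosh t + t * Real.sinh t - Real.cosh t) t :=
    ((hasDerivAt_id' (𝕜 := ℝ) (x := t)).mul (Real.hasDerivAt_cosh t)).sub (Real.hasDerivAt_sinh t)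
  have h2 := (Real.hasDerivAt_sinh t).div h1 hden
  have h3 := (hasDerivAt_const t K).div (hasDerivAt_pow 2 t) (pow_ne_zero 2 ht.ne')
  have h := h2.sub h3
  refine h.congr_deriv ?_
  rw [show Real.cosh t * (t * Real.cosh t - Real.sinh t) - Real.sinh t * (1 * Real.cosh t + t * Real.sinh t - Real.cosh t) = t - Real.sinh t * Real.cosh t by linear_combination t * Real.cosh_sq_sub_sinh_sq t]
  field_simp
  ring

lemma phi_anti (K : ℝ) (hK : K < 3) :
    StrictAntiOn (fun t : ℝ => Real.sinh t / (t * Real.cosh t - Real.sinh t) - K / t ^ 2)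
      (Set.Ioi 0) := by
  apply strictAntiOn_of_deriv_neg (convex_Ioi 0)
  · intro t ht
    exact (phi_deriv K t ht).continuousAt.continuousWithinAt
  · intro t ht
    rw [interior_Ioi, Set.mem_Ioi] at ht
    rw [(phi_deriv K t ht).deriv]
    have hden : 0 < t * Real.cosh t - Real.sinh t := den_pos t ht
    have hB := key_B t ht.le
    have heq : (t - Real.sinh t * Real.cosh t) / (t * Real.cosh t - Real.sinh t) ^ 2 + 2 * K / t ^ 3
        = ((t - Real.sinh t * Real.cosh t) * t ^ 3 + 2 * K * (t * Real.cosh t - Real.sinh t) ^ 2)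
          / ((t * Real.cosh t - Real.sinh t) ^ 2 * t ^ 3) := by
      field_simp
    rw [heq]
    apply div_neg_of_neg_of_pos
    · nlinarith [mul_pos (mul_pos ht (pow_pos hden 2)) (sub_pos.2 hK),
        mul_pos ht (pow_pos hden 2)]
    · positivity

theorem stmt_7 (x y : ℝ) (hx : 0 < x) (hy0 : 0 < y) (hy1 : y < 1) :
    (coth x - y * coth (x * y)) / ((x * y * coth (x * y) - 1) * (x * coth x - 1)) +
      4 * (1 - y⁻¹ ^ 2) / (Real.sinh (2 * x) - 2 * x) > 0 := by
  have hu0 : 0 < x * y := mul_pos hx hy0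
  have hux : x * y < x := by nlinarith
  have hs1 : 0 < Real.sinh x := Real.sinh_pos_iff.2 hx
  have hs2 : 0 < Real.sinh (x * y) := Real.sinh_pos_iff.2 hu0
  have hA : 0 < x * Real.cosh x - Real.sinh x := den_pos x hx
  have hB : 0 < x * y * Real.cosh (x * y) - Real.sinh (x * y) := den_pos (x * y) hu0
  have hD : 0 < Real.sinh (2 * x) - 2 * x := by
    have := Real.self_lt_sinh_iff.2 (show (0:ℝ) < 2 * x by linarith)
    linarith
  have hD' : 4 * x ^ 3 / 3 < Real.sinh (2 * x) - 2 * x := by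
    have := sinh_lb (2 * x) (by linarith)
    nlinarith
  set K : ℝ := 4 * x ^ 3 / (Real.sinh (2 * x) - 2 * x) with hKdef
  have hK3 : K < 3 := by
    rw [hKdef, div_lt_iff₀ hD]
    nlinarith
  have hΦ : Real.sinh x / (x * Real.cosh x - Real.sinh x) - K / x ^ 2 <
      Real.sinh (x * y) / (x * y * Real.cosh (x * y) - Real.sinh (x * y)) - K / (x * y) ^ 2 :=
    phi_anti K hK3 (Set.mem_Ioi.2 hu0) (Set.mem_Ioi.2 hx) hux
  have main : (coth x - y * coth (x * y)) / ((x * y * coth (x * y) - 1) * (x * coth x - 1)) +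
      4 * (1 - y⁻¹ ^ 2) / (Real.sinh (2 * x) - 2 * x)
      = (1 / x) * ((Real.sinh (x * y) / (x * y * Real.cosh (x * y) - Real.sinh (x * y))
          - K / (x * y) ^ 2)
        - (Real.sinh x / (x * Real.cosh x - Real.sinh x) - K / x ^ 2)) := by
    unfold coth
    rw [hKdef]
    have := hA.ne'; have := hB.ne'; have := hD.ne'; have := hs1.ne'; have := hs2.ne'; have := hx.ne'; have := hy0.ne'
    generalize Real.cosh x = c1 at *; generalize Real.sinh x = s1 at *; generalize Real.cosh (x * y) = c2 at *; generalize Real.sinh (x * y) = s2 at *; generalize Real.sinh (2 * x) = S at *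
    have e1 : x * y * (c2 / s2) - 1 = (x * y * c2 - s2) / s2 := by field_simp
    have e2 : x * (c1 / s1) - 1 = (x * c1 - s1) / s1 := by field_simp
    have e3 : c1 / s1 - y * (c2 / s2) = (s2 * (x * c1 - s1) - s1 * (x * y * c2 - s2)) / (x * s1 * s2) := by field_simp; ring
    rw [e1, e2, e3]
    field_simp
    ring
  rw [main]
  have h1 : (0:ℝ) < 1 / x := by positivity
  exact mul_pos h1 (sub_pos.2 hΦ)
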